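/- Let g(x) = |x|^{−a} with a ∈ [0, 1/2), κ > 0, let J₀(t,x) = (g(x−κt) + g(x+κt))/2 and G_κ(t,x) = (1/2)·1_{|x| ≤ κt}. Then for |x| ≤ κt, the space-time convolution (J₀² ⋆ G_κ²)(t,x) = ∫₀ᵗ∫_ℝ J₀(s,y)² G_κ(t−s, x−y)² dy ds equals (1/(32κ(1−a)²))[(κt−x)^{1−a} + (κt+x)^{1−a}]² + (t/(16(1−2a)))[(κt−x)^{1−2a} + (κt+x)^{1−2a}]. -/

import Mathlib

open Real MeasureTheory

/-- Wave kernel `G_κ(t,x) = (1/2)·1_{|x| ≤ κt}` for `t ≥ 0`, and `0` for `t < 0`. -/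
noncomputable def waveKernel (κ t x : ℝ) : ℝ :=
  if 0 ≤ t ∧ |x| ≤ κ * t then 1 / 2 else 0

/-- `T_κ(t,x) = (t − |x|/(2κ))·1_{|x| ≤ 2κt}`. -/
noncomputable def Tker (κ t x : ℝ) : ℝ :=
  if |x| ≤ 2 * κ * t then t - |x| / (2 * κ) else 0


noncomputable def sgnPow (q u : ℝ) : ℝ := if 0 ≤ u then u ^ q else -((-u) ^ q)

lemma sgnPow_of_nonneg {q u : ℝ} (h : 0 ≤ u) : sgnPow q u = u ^ q := if_pos h

lemma sgnPow_of_nonpos {q u : ℝ} (hq : 0 < q) (h : u ≤ 0) : sgnPow q u = -((-u) ^ q) := by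
  rcases eq_or_lt_of_le h with rfl | h'
  · simp [sgnPow, Real.zero_rpow hq.ne']
  · exact if_neg (not_le.2 h')

lemma intervalIntegrable_congr' {f g : ℝ → ℝ} {c d : ℝ}
    (h : IntervalIntegrable f volume c d) (he : Set.EqOn f g (Set.uIoc c d)) :
    IntervalIntegrable g volume c d := by
  rw [intervalIntegrable_iff] at h ⊢
  exact h.congr_fun he measurableSet_uIoc

lemma intervalIntegrable_abs_rpow {p : ℝ} (hp : -1 < p) (c d : ℝ) :
    IntervalIntegrable (fun u => |u| ^ p) volume c d := by
  have key : ∀ e : ℝ, 0 ≤ e → IntervalIntegrable (fun u => |u| ^ p) volume 0 e := by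
    intro e he
    refine intervalIntegrable_congr' (intervalIntegral.intervalIntegrable_rpow' hp) ?_
    intro u hu
    rw [Set.uIoc_of_le he] at hu
    show u ^ p = |u| ^ p
    rw [abs_of_pos hu.1]
  have key2 : ∀ e : ℝ, IntervalIntegrable (fun u => |u| ^ p) volume 0 e := by
    intro e
    rcases le_total 0 e with he | he
    · exact key e he
    · have h2 := (IntervalIntegrable.iff_comp_neg (by simp)).1 (key (-e) (by linarith))
      simp only [abs_neg, neg_zero, neg_neg] at h2
      exact h2
  exact (key2 c).symm.trans (key2 d)

lemma intervalIntegrable_sgnPow {q : ℝ} (hq : 0 < q) (c d : ℝ) :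
    IntervalIntegrable (fun u => sgnPow q u) volume c d := by
  have key2 : ∀ e : ℝ, IntervalIntegrable (fun u => sgnPow q u) volume 0 e := by
    intro e
    rcases le_total 0 e with he | he
    · refine intervalIntegrable_congr' (intervalIntegrable_abs_rpow (p := q) (by linarith) 0 e) ?_
      intro u hu
      rw [Set.uIoc_of_le he] at hu
      show |u| ^ q = sgnPow q u
      rw [sgnPow_of_nonneg hu.1.le, abs_of_pos hu.1]
    · refine intervalIntegrable_congr'
        ((intervalIntegrable_abs_rpow (p := q) (by linarith) 0 e).neg) ?_
      intro u hu
      rw [Set.uIoc_of_ge he] at hu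
      show -(|u| ^ q) = sgnPow q u
      rw [sgnPow_of_nonpos hq hu.2, abs_of_nonpos hu.2]
  exact (key2 c).symm.trans (key2 d)

lemma integral_abs_rpow {p : ℝ} (hp : -1 < p) (c d : ℝ) :
    ∫ u in c..d, |u| ^ p = (sgnPow (p + 1) d - sgnPow (p + 1) c) / (p + 1) := by
  have hp1 : (0:ℝ) < p + 1 := by linarith
  have key : ∀ e : ℝ, 0 ≤ e → ∫ u in (0:ℝ)..e, |u| ^ p = sgnPow (p + 1) e / (p + 1) := by
    intro e he
    rw [intervalIntegral.integral_congr (g := fun u : ℝ => u ^ p) ?_,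
      integral_rpow (Or.inl hp), Real.zero_rpow hp1.ne', sgnPow_of_nonneg he]
    · ring
    · intro u hu
      rw [Set.uIcc_of_le he] at hu
      show |u| ^ p = u ^ p
      rw [abs_of_nonneg hu.1]
  have key2 : ∀ e : ℝ, ∫ u in (0:ℝ)..e, |u| ^ p = sgnPow (p + 1) e / (p + 1) := by
    intro e
    rcases le_total 0 e with he | he
    · exact key e he
    · have h1 : ∫ u in (0:ℝ)..e, |u| ^ p = ∫ u in (0:ℝ)..e, (fun v => |v| ^ p) (-u) := by
        apply intervalIntegral.integral_congr
        intro u _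
        show |u| ^ p = |(-u)| ^ p
        rw [abs_neg]
      rw [h1, intervalIntegral.integral_comp_neg (fun v => |v| ^ p), neg_zero,
        intervalIntegral.integral_symm, key (-e) (by linarith),
        sgnPow_of_nonneg (by linarith : (0:ℝ) ≤ -e), sgnPow_of_nonpos hp1 he]
      ring
  have hsub := intervalIntegral.integral_interval_sub_left
    (intervalIntegrable_abs_rpow hp 0 d) (intervalIntegrable_abs_rpow hp 0 c)
  rw [← hsub, key2, key2]
  ring

lemma integral_sgnPow {q : ℝ} (hq : 0 < q) (c d : ℝ) :
    ∫ u in c..d, sgnPow q u = (|d| ^ (q + 1) - |c| ^ (q + 1)) / (q + 1) := by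
  have key : ∀ e : ℝ, 0 ≤ e → ∫ u in (0:ℝ)..e, sgnPow q u = |e| ^ (q + 1) / (q + 1) := by
    intro e he
    rw [intervalIntegral.integral_congr (g := fun u : ℝ => u ^ q) ?_,
      integral_rpow (Or.inl (by linarith)), Real.zero_rpow (by positivity),
      abs_of_nonneg he]
    · ring
    · intro u hu
      rw [Set.uIcc_of_le he] at hu
      exact sgnPow_of_nonneg hu.1
  have key2 : ∀ e : ℝ, ∫ u in (0:ℝ)..e, sgnPow q u = |e| ^ (q + 1) / (q + 1) := by
    intro e
    rcases le_total 0 e with he | he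
    · exact key e he
    · have h1 : ∫ u in (0:ℝ)..e, sgnPow q u
          = ∫ u in (0:ℝ)..e, -((fun v => sgnPow q v) (-u)) := by
        apply intervalIntegral.integral_congr
        intro u _
        show sgnPow q u = -(sgnPow q (-u))
        rcases le_total 0 u with h | h
        · rw [sgnPow_of_nonneg h, sgnPow_of_nonpos hq (by linarith), neg_neg, neg_neg]
        · rw [sgnPow_of_nonpos hq h, sgnPow_of_nonneg (by linarith)]
      rw [h1, intervalIntegral.integral_neg, intervalIntegral.integral_comp_neg
        (fun v => sgnPow q v), neg_zero, intervalIntegral.integral_symm,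
        key (-e) (by linarith), abs_neg]
      ring
  have hsub := intervalIntegral.integral_interval_sub_left
    (intervalIntegrable_sgnPow hq 0 d) (intervalIntegrable_sgnPow hq 0 c)
  rw [← hsub, key2, key2]
  ring
section Pointwise
variable {a : ℝ} (ha0 : 0 ≤ a) (ha : a < 1 / 2)
include ha0 ha

lemma abs_rpow_mul_self (u : ℝ) : |u| ^ (-a) * |u| ^ (-a) = |u| ^ (-(2 * a)) := by
  rcases eq_or_ne u 0 with rfl | hu
  · rcases eq_or_lt_of_le ha0 with rfl | ha0'
    · norm_num
    · rw [abs_zero, Real.zero_rpow (by linarith), Real.zero_rpow (by linarith)]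
      ring
  · rw [← Real.rpow_add (abs_pos.2 hu)]
    ring_nf

lemma abs_rpow_mul_sgnPow (u : ℝ) :
    |u| ^ (-a) * sgnPow (1 - a) u = sgnPow (1 - 2 * a) u := by
  rcases lt_trichotomy u 0 with hu | rfl | hu
  · rw [sgnPow_of_nonpos (by linarith) hu.le, sgnPow_of_nonpos (by linarith) hu.le,
      abs_of_neg hu, mul_neg, neg_inj, ← Real.rpow_add (by linarith : (0:ℝ) < -u),
      show -a + (1 - a) = 1 - 2 * a by ring]
  · rw [sgnPow_of_nonneg le_rfl, sgnPow_of_nonneg le_rfl, Real.zero_rpow (by linarith),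
      Real.zero_rpow (by linarith), mul_zero]
  · rw [sgnPow_of_nonneg hu.le, sgnPow_of_nonneg hu.le, abs_of_pos hu,
      ← Real.rpow_add hu, show -a + (1 - a) = 1 - 2 * a by ring]

lemma mul_abs_rpow (u : ℝ) : u * |u| ^ (-(2 * a)) = sgnPow (1 - 2 * a) u := by
  rcases lt_trichotomy u 0 with hu | rfl | hu
  · rw [sgnPow_of_nonpos (by linarith) hu.le, abs_of_neg hu]
    have h1 : (-u) ^ (1 - 2 * a) = (-u) ^ (1:ℝ) * (-u) ^ (-(2 * a)) := by
      rw [← Real.rpow_add (by linarith)]; ring_nf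
    rw [h1, Real.rpow_one]; ring
  · rw [sgnPow_of_nonneg le_rfl, Real.zero_rpow (by linarith), zero_mul]
  · rw [sgnPow_of_nonneg hu.le, abs_of_pos hu]
    have h1 : u ^ (1 - 2 * a) = u ^ (1:ℝ) * u ^ (-(2 * a)) := by
      rw [← Real.rpow_add hu]; ring_nf
    rw [h1, Real.rpow_one]

end Pointwise

lemma inner_v {a : ℝ} (ha0 : 0 ≤ a) (ha : a < 1 / 2) (u d : ℝ) :
    ∫ v in u..d, (|u| ^ (-a) + |v| ^ (-a)) ^ 2
      = (d - u) * |u| ^ (-(2 * a))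
        + (2 / (1 - a)) * |u| ^ (-a) * (sgnPow (1 - a) d - sgnPow (1 - a) u)
        + (sgnPow (1 - 2 * a) d - sgnPow (1 - 2 * a) u) / (1 - 2 * a) := by
  have ha1 : -1 < -a := by linarith
  have ha2 : -1 < -(2 * a) := by linarith
  have hcongr : ∫ v in u..d, (|u| ^ (-a) + |v| ^ (-a)) ^ 2
      = ∫ v in u..d, (|u| ^ (-(2 * a)) + ((2 * |u| ^ (-a)) * |v| ^ (-a) + |v| ^ (-(2 * a)))) := by
    apply intervalIntegral.integral_congr
    intro v _
    show (|u| ^ (-a) + |v| ^ (-a)) ^ 2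
      = |u| ^ (-(2 * a)) + (2 * |u| ^ (-a) * |v| ^ (-a) + |v| ^ (-(2 * a)))
    have h1 := abs_rpow_mul_self ha0 ha u
    have h2 := abs_rpow_mul_self ha0 ha v
    linear_combination h1 + h2
  rw [hcongr, intervalIntegral.integral_add
      (intervalIntegrable_const)
      (((intervalIntegrable_abs_rpow ha1 u d).const_mul _).add
        (intervalIntegrable_abs_rpow ha2 u d)),
    intervalIntegral.integral_add ((intervalIntegrable_abs_rpow ha1 u d).const_mul _)
      (intervalIntegrable_abs_rpow ha2 u d),
    intervalIntegral.integral_const, intervalIntegral.integral_const_mul,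
    integral_abs_rpow ha1, integral_abs_rpow ha2]
  rw [show -a + 1 = 1 - a by ring, show -(2 * a) + 1 = 1 - 2 * a by ring]
  have h12 : (1:ℝ) - 2 * a ≠ 0 := by linarith
  have h1 : (1:ℝ) - a ≠ 0 := by linarith
  field_simp
  ring

lemma s_to_v {a κ : ℝ} (hκ : 0 < κ) (u d : ℝ) :
    ∫ s in (0:ℝ)..((d - u) / (2 * κ)), (|u| ^ (-a) + |2 * κ * s + u| ^ (-a)) ^ 2
      = (2 * κ)⁻¹ * ∫ v in u..d, (|u| ^ (-a) + |v| ^ (-a)) ^ 2 := by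
  have h2κ : (2 * κ) ≠ 0 := by positivity
  have := intervalIntegral.integral_comp_mul_add
    (a := 0) (b := (d - u) / (2 * κ))
    (fun v => (|u| ^ (-a) + |v| ^ (-a)) ^ 2) h2κ u
  simp only [mul_zero, zero_add] at this
  rw [this, smul_eq_mul]
  congr 1
  rw [mul_div_cancel₀ _ h2κ]
  congr 1
  ring
lemma intervalIntegrable_abs_affine_rpow {p : ℝ} (hp : -1 < p) {c : ℝ} (hc : c ≠ 0)
    (d l r : ℝ) : IntervalIntegrable (fun s => |c * s + d| ^ p) volume l r := by
  have h1 := (intervalIntegrable_abs_rpow hp (c * l + d) (c * r + d)).comp_add_right d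
  have h2 := h1.comp_mul_left (c := c)
  have e1 : (c * l + d - d) / c = l := by field_simp; ring
  have e2 : (c * r + d - d) / c = r := by field_simp; ring
  rwa [e1, e2] at h2

noncomputable def Fker (a κ s u : ℝ) : ℝ := (|u| ^ (-a) + |2 * κ * s + u| ^ (-a)) ^ 2

noncomputable def fcut (a κ A B s u : ℝ) : ℝ :=
  if 0 ≤ s ∧ A ≤ u ∧ u ≤ B - 2 * κ * s then Fker a κ s u else 0

noncomputable def phiFn (a κ B u : ℝ) : ℝ :=
  (2 * κ)⁻¹ * ((B - u) * |u| ^ (-(2 * a))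
    + (2 / (1 - a)) * |u| ^ (-a) * (B ^ (1 - a) - sgnPow (1 - a) u)
    + (B ^ (1 - 2 * a) - sgnPow (1 - 2 * a) u) / (1 - 2 * a))

lemma phiFn_flat {a : ℝ} (ha0 : 0 ≤ a) (ha : a < 1 / 2) (κ B u : ℝ) :
    phiFn a κ B u
      = ((2 * κ)⁻¹ * B) * |u| ^ (-(2 * a))
        + ((2 * κ)⁻¹ * (2 * B ^ (1 - a) / (1 - a))) * |u| ^ (-a)
        + (-(2 * κ)⁻¹ * (1 + 2 / (1 - a) + 1 / (1 - 2 * a))) * sgnPow (1 - 2 * a) u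
        + (2 * κ)⁻¹ * (B ^ (1 - 2 * a) / (1 - 2 * a)) := by
  have h1 := mul_abs_rpow ha0 ha u
  have h2 := abs_rpow_mul_sgnPow ha0 ha u
  unfold phiFn
  linear_combination (-(2 * κ)⁻¹) * h1 - ((2 * κ)⁻¹ * (2 / (1 - a))) * h2

lemma phiFn_intervalIntegrable {a : ℝ} (ha0 : 0 ≤ a) (ha : a < 1 / 2) (κ B l r : ℝ) :
    IntervalIntegrable (phiFn a κ B) volume l r := by
  have ha1 : (-1 : ℝ) < -a := by linarith
  have ha2 : (-1 : ℝ) < -(2 * a) := by linarith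
  have hq : (0 : ℝ) < 1 - 2 * a := by linarith
  have hII : IntervalIntegrable (fun u =>
      ((2 * κ)⁻¹ * B) * |u| ^ (-(2 * a))
        + ((2 * κ)⁻¹ * (2 * B ^ (1 - a) / (1 - a))) * |u| ^ (-a)
        + (-(2 * κ)⁻¹ * (1 + 2 / (1 - a) + 1 / (1 - 2 * a))) * sgnPow (1 - 2 * a) u
        + (2 * κ)⁻¹ * (B ^ (1 - 2 * a) / (1 - 2 * a))) volume l r :=
    ((((intervalIntegrable_abs_rpow ha2 l r).const_mul _).add
      ((intervalIntegrable_abs_rpow ha1 l r).const_mul _)).add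
      ((intervalIntegrable_sgnPow hq l r).const_mul _)).add intervalIntegrable_const
  refine intervalIntegrable_congr' hII ?_
  intro u _
  exact (phiFn_flat ha0 ha κ B u).symm

lemma integral_phiFn {a κ A B : ℝ} (ha0 : 0 ≤ a) (ha : a < 1 / 2) (hκ : 0 < κ)
    (hA : A ≤ 0) (hB : 0 ≤ B) :
    ∫ u in A..B, phiFn a κ B u
      = ((2 * κ)⁻¹ * B) * ((B ^ (1 - 2 * a) + (-A) ^ (1 - 2 * a)) / (1 - 2 * a))
        + ((2 * κ)⁻¹ * (2 * B ^ (1 - a) / (1 - a)))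
            * ((B ^ (1 - a) + (-A) ^ (1 - a)) / (1 - a))
        + (-(2 * κ)⁻¹ * (1 + 2 / (1 - a) + 1 / (1 - 2 * a)))
            * ((B ^ (2 - 2 * a) - (-A) ^ (2 - 2 * a)) / (2 - 2 * a))
        + (2 * κ)⁻¹ * (B ^ (1 - 2 * a) / (1 - 2 * a)) * (B - A) := by
  have ha1 : (-1 : ℝ) < -a := by linarith
  have ha2 : (-1 : ℝ) < -(2 * a) := by linarith
  have hq : (0 : ℝ) < 1 - 2 * a := by linarith
  have hq1 : (0 : ℝ) < 1 - a := by linarith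
  rw [intervalIntegral.integral_congr (g := fun u =>
      ((2 * κ)⁻¹ * B) * |u| ^ (-(2 * a))
        + ((2 * κ)⁻¹ * (2 * B ^ (1 - a) / (1 - a))) * |u| ^ (-a)
        + (-(2 * κ)⁻¹ * (1 + 2 / (1 - a) + 1 / (1 - 2 * a))) * sgnPow (1 - 2 * a) u
        + (2 * κ)⁻¹ * (B ^ (1 - 2 * a) / (1 - 2 * a)))
      (fun u _ => phiFn_flat ha0 ha κ B u)]
  rw [intervalIntegral.integral_add ((((intervalIntegrable_abs_rpow ha2 A B).const_mul _).add
        ((intervalIntegrable_abs_rpow ha1 A B).const_mul _)).add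
        ((intervalIntegrable_sgnPow hq A B).const_mul _)) intervalIntegrable_const,
    intervalIntegral.integral_add (((intervalIntegrable_abs_rpow ha2 A B).const_mul _).add
        ((intervalIntegrable_abs_rpow ha1 A B).const_mul _))
        ((intervalIntegrable_sgnPow hq A B).const_mul _),
    intervalIntegral.integral_add ((intervalIntegrable_abs_rpow ha2 A B).const_mul _)
        ((intervalIntegrable_abs_rpow ha1 A B).const_mul _),
    intervalIntegral.integral_const_mul, intervalIntegral.integral_const_mul,
    intervalIntegral.integral_const_mul, intervalIntegral.integral_const,
    integral_abs_rpow ha1, integral_abs_rpow ha2, integral_sgnPow hq,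
    show -a + 1 = 1 - a by ring, show -(2 * a) + 1 = 1 - 2 * a by ring,
    show 1 - 2 * a + 1 = 2 - 2 * a by ring,
    sgnPow_of_nonneg hB, sgnPow_of_nonneg hB, sgnPow_of_nonpos hq hA,
    sgnPow_of_nonpos hq1 hA, abs_of_nonneg hB, abs_of_nonpos hA]
  have h12 : (1 : ℝ) - 2 * a ≠ 0 := by linarith
  have h1 : (1 : ℝ) - a ≠ 0 := by linarith
  have h22 : (2 : ℝ) - 2 * a ≠ 0 := by linarith
  have hκ0 : κ ≠ 0 := hκ.ne'
  rw [smul_eq_mul]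
  field_simp
  ring

lemma fubini_swap_step {a κ A B T : ℝ} (ha0 : 0 ≤ a) (ha : a < 1 / 2) (hκ : 0 < κ)
    (hAB : A ≤ B) (hB : 0 ≤ B) (hT : 2 * κ * T = B - A) :
    ∫ s in (0:ℝ)..T, ∫ u in A..(B - 2 * κ * s), Fker a κ s u
      = ∫ u in A..B, phiFn a κ B u := by
  have hκ2 : (0:ℝ) < 2 * κ := by linarith
  have hT0 : 0 ≤ T := by nlinarith
  have ha1 : (-1 : ℝ) < -a := by linarith
  have ha2 : (-1 : ℝ) < -(2 * a) := by linarith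
  have slice_u : ∀ s, 0 ≤ s → (fun u => fcut a κ A B s u)
      = (Set.Icc A (B - 2 * κ * s)).indicator (Fker a κ s) := by
    intro s hs; funext u
    by_cases h : u ∈ Set.Icc A (B - 2 * κ * s)
    · rw [Set.indicator_of_mem h]
      exact if_pos ⟨hs, h.1, h.2⟩
    · rw [Set.indicator_of_notMem h]
      refine if_neg ?_
      rintro ⟨-, h1, h2⟩
      exact h ⟨h1, h2⟩
  have int_u : ∀ s ∈ Set.Icc (0:ℝ) T,
      (∫ u, fcut a κ A B s u) = ∫ u in A..(B - 2 * κ * s), Fker a κ s u := by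
    intro s hs
    have hABs : A ≤ B - 2 * κ * s := by nlinarith [hs.1, hs.2]
    rw [slice_u s hs.1, MeasureTheory.integral_indicator measurableSet_Icc,
      MeasureTheory.integral_Icc_eq_integral_Ioc,
      intervalIntegral.integral_of_le hABs]
  have zero_out_s : ∀ s, s ∉ Set.Icc (0:ℝ) T →
      (fun u => fcut a κ A B s u) = fun _ => 0 := by
    intro s hs; funext u
    refine if_neg ?_
    rintro ⟨h0, h1, h2⟩
    exact hs ⟨h0, by nlinarith⟩
  have slice_s : ∀ u, A ≤ u → (fun s => fcut a κ A B s u)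
      = (Set.Icc 0 ((B - u) / (2 * κ))).indicator (fun s => Fker a κ s u) := by
    intro u hu; funext s
    by_cases h : s ∈ Set.Icc (0:ℝ) ((B - u) / (2 * κ))
    · rw [Set.indicator_of_mem h]
      refine if_pos ⟨h.1, hu, ?_⟩
      have h2 := (le_div_iff₀ hκ2).1 h.2
      linarith
    · rw [Set.indicator_of_notMem h]
      refine if_neg ?_
      rintro ⟨h0, -, h2⟩
      exact h ⟨h0, by rw [le_div_iff₀ hκ2]; linarith⟩
  have zero_out_u : ∀ u, ¬ A ≤ u → (fun s => fcut a κ A B s u) = fun _ => 0 := by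
    intro u hu; funext s
    exact if_neg fun hc => hu hc.2.1
  have int_s : ∀ u, (∫ s, fcut a κ A B s u)
      = (Set.Icc A B).indicator (phiFn a κ B) u := by
    intro u
    by_cases hu : A ≤ u
    · by_cases hu2 : u ≤ B
      · rw [slice_s u hu, MeasureTheory.integral_indicator measurableSet_Icc,
          MeasureTheory.integral_Icc_eq_integral_Ioc,
          ← intervalIntegral.integral_of_le (div_nonneg (by linarith) hκ2.le),
          Set.indicator_of_mem (Set.mem_Icc.2 ⟨hu, hu2⟩)]
        show ∫ s in (0:ℝ)..((B - u) / (2 * κ)),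
            (|u| ^ (-a) + |2 * κ * s + u| ^ (-a)) ^ 2 = _
        rw [s_to_v hκ u B, inner_v ha0 ha u B, sgnPow_of_nonneg hB, sgnPow_of_nonneg hB]
        rfl
      · rw [slice_s u hu,
          Set.indicator_of_notMem (fun hc : u ∈ Set.Icc A B => hu2 hc.2),
          Set.Icc_eq_empty (not_le.2 (div_neg_of_neg_of_pos (by linarith) hκ2)),
          Set.indicator_empty]
        simp
    · rw [zero_out_u u hu,
        Set.indicator_of_notMem (fun hc : u ∈ Set.Icc A B => hu hc.1)]
      simp
  have II_F : ∀ u l r, IntervalIntegrable (fun s => Fker a κ s u) volume l r := by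
    intro u l r
    have hII : IntervalIntegrable (fun s =>
        |u| ^ (-a) * |u| ^ (-a) + 2 * |u| ^ (-a) * |2 * κ * s + u| ^ (-a)
          + |2 * κ * s + u| ^ (-(2 * a))) volume l r := by
      have i2 : IntervalIntegrable (fun s => 2 * |u| ^ (-a) * |2 * κ * s + u| ^ (-a))
          volume l r := by
        have := (intervalIntegrable_abs_affine_rpow ha1 hκ2.ne' u l r).const_mul
          (2 * |u| ^ (-a))
        simpa [mul_assoc] using this
      exact (intervalIntegrable_const.add i2).add
        (intervalIntegrable_abs_affine_rpow ha2 hκ2.ne' u l r)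
    refine intervalIntegrable_congr' hII ?_
    intro s _
    show _ = Fker a κ s u
    unfold Fker
    have h2 := abs_rpow_mul_self ha0 ha (2 * κ * s + u)
    linear_combination -h2
  have hf_nonneg : ∀ s u, 0 ≤ fcut a κ A B s u := by
    intro s u
    unfold fcut
    split
    · unfold Fker; positivity
    · exact le_rfl
  have int_slice : ∀ u, Integrable (fun s => fcut a κ A B s u) volume := by
    intro u
    by_cases hu : A ≤ u
    · rw [slice_s u hu]
      rcases le_or_gt 0 ((B - u) / (2 * κ)) with hm | hm
      · exact ((intervalIntegrable_iff_integrableOn_Icc_of_le hm).1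
          (II_F u 0 _)).integrable_indicator measurableSet_Icc
      · rw [Set.Icc_eq_empty (not_le.2 hm), Set.indicator_empty]
        exact integrable_zero _ _ _
    · rw [zero_out_u u hu]
      exact integrable_zero _ _ _
  have norm_f : ∀ u, (fun s => ‖fcut a κ A B s u‖) = fun s => fcut a κ A B s u := by
    intro u; funext s; exact Real.norm_of_nonneg (hf_nonneg s u)
  have int_norm : Integrable (fun u => ∫ s, ‖fcut a κ A B s u‖) volume := by
    have heq : (fun u => ∫ s, ‖fcut a κ A B s u‖)
        = (Set.Icc A B).indicator (phiFn a κ B) := by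
      funext u; rw [norm_f u, int_s u]
    rw [heq]
    exact ((intervalIntegrable_iff_integrableOn_Icc_of_le hAB).1
      (phiFn_intervalIntegrable ha0 ha κ B A B)).integrable_indicator measurableSet_Icc
  have hmeas : AEStronglyMeasurable (Function.uncurry (fcut a κ A B))
      ((volume : Measure ℝ).prod volume) := by
    apply Measurable.aestronglyMeasurable
    have huncurry : Function.uncurry (fcut a κ A B) = fun p : ℝ × ℝ =>
        if 0 ≤ p.1 ∧ A ≤ p.2 ∧ p.2 ≤ B - 2 * κ * p.1
        then (|p.2| ^ (-a) + |2 * κ * p.1 + p.2| ^ (-a)) ^ 2 else 0 := rfl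
    rw [huncurry]
    refine Measurable.ite ?_ ?_ measurable_const
    · have hset : {p : ℝ × ℝ | 0 ≤ p.1 ∧ A ≤ p.2 ∧ p.2 ≤ B - 2 * κ * p.1}
          = {p : ℝ × ℝ | (0:ℝ) ≤ p.1} ∩ ({p : ℝ × ℝ | A ≤ p.2}
            ∩ {p : ℝ × ℝ | p.2 ≤ B - 2 * κ * p.1}) := rfl
      rw [hset]
      exact (measurableSet_le measurable_const measurable_fst).inter
        ((measurableSet_le measurable_const measurable_snd).inter
          (measurableSet_le measurable_snd
            (measurable_const.sub (measurable_const.mul measurable_fst))))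
    · have m1 : Measurable fun p : ℝ × ℝ => |p.2| ^ (-a) :=
        measurable_snd.abs.pow measurable_const
      have m2 : Measurable fun p : ℝ × ℝ => |2 * κ * p.1 + p.2| ^ (-a) :=
        ((measurable_const.mul measurable_fst).add measurable_snd).abs.pow measurable_const
      exact (m1.add m2).pow_const 2
  have hint : Integrable (Function.uncurry (fcut a κ A B))
      ((volume : Measure ℝ).prod volume) := by
    rw [MeasureTheory.integrable_prod_iff' hmeas]
    exact ⟨Filter.Eventually.of_forall int_slice, int_norm⟩
  have swap := MeasureTheory.integral_integral_swap (f := fcut a κ A B) hint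
  calc ∫ s in (0:ℝ)..T, ∫ u in A..(B - 2 * κ * s), Fker a κ s u
      = ∫ s in Set.Icc (0:ℝ) T, ∫ u in A..(B - 2 * κ * s), Fker a κ s u := by
        rw [intervalIntegral.integral_of_le hT0, MeasureTheory.integral_Icc_eq_integral_Ioc]
    _ = ∫ s in Set.Icc (0:ℝ) T, ∫ u, fcut a κ A B s u :=
        MeasureTheory.setIntegral_congr_fun measurableSet_Icc
          (fun s hs => (int_u s hs).symm)
    _ = ∫ s, ∫ u, fcut a κ A B s u := by
        rw [← MeasureTheory.integral_indicator measurableSet_Icc]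
        congr 1
        funext s
        by_cases hs : s ∈ Set.Icc (0:ℝ) T
        · rw [Set.indicator_of_mem hs]
        · rw [Set.indicator_of_notMem hs, zero_out_s s hs]
          simp
    _ = ∫ u, ∫ s, fcut a κ A B s u := swap
    _ = ∫ u, (Set.Icc A B).indicator (phiFn a κ B) u := by
        congr 1
        funext u
        exact int_s u
    _ = ∫ u in A..B, phiFn a κ B u := by
        rw [MeasureTheory.integral_indicator measurableSet_Icc,
          MeasureTheory.integral_Icc_eq_integral_Ioc,
          intervalIntegral.integral_of_le hAB]
set_option maxHeartbeats 1000000 in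
theorem J0_sq_conv_waveKernel_sq (κ a t x : ℝ) (hκ : 0 < κ)
    (ha0 : 0 ≤ a) (ha : a < 1 / 2) (hx : |x| ≤ κ * t) :
    ∫ s in (0:ℝ)..t, ∫ y : ℝ,
        ((|y - κ * s| ^ (-a) + |y + κ * s| ^ (-a)) / 2) ^ 2
          * (waveKernel κ (t - s) (x - y)) ^ 2
      = 1 / (32 * κ * (1 - a) ^ 2)
          * ((κ * t - x) ^ (1 - a) + (κ * t + x) ^ (1 - a)) ^ 2
        + t / (16 * (1 - 2 * a))
          * ((κ * t - x) ^ (1 - 2 * a) + (κ * t + x) ^ (1 - 2 * a)) := by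
  have hx1 := abs_le.1 hx
  have hM : 0 ≤ κ * t - x := by linarith [hx1.2]
  have hN : 0 ≤ κ * t + x := by linarith [hx1.1]
  have ht0 : 0 ≤ t := by nlinarith [abs_nonneg x, hx]
  have h1a : (1 : ℝ) - a ≠ 0 := by linarith
  have h12a : (1 : ℝ) - 2 * a ≠ 0 := by linarith
  have h22a : (2 : ℝ) - 2 * a ≠ 0 := by linarith
  have step1 : ∀ s ∈ Set.uIcc (0:ℝ) t,
      (∫ y : ℝ, ((|y - κ * s| ^ (-a) + |y + κ * s| ^ (-a)) / 2) ^ 2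
          * (waveKernel κ (t - s) (x - y)) ^ 2)
        = (1/16 : ℝ) * ∫ u in (x - κ * t)..(x + κ * t - 2 * κ * s), Fker a κ s u := by
    intro s hs
    rw [Set.uIcc_of_le ht0] at hs
    have hts : 0 ≤ t - s := by linarith [hs.2]
    have hκts : 0 ≤ κ * (t - s) := mul_nonneg hκ.le hts
    have hwk : (fun y => ((|y - κ * s| ^ (-a) + |y + κ * s| ^ (-a)) / 2) ^ 2
          * (waveKernel κ (t - s) (x - y)) ^ 2)
        = (Set.Icc (x - κ * (t - s)) (x + κ * (t - s))).indicator
            (fun y => (1/16 : ℝ) * (|y - κ * s| ^ (-a) + |y + κ * s| ^ (-a)) ^ 2) := by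
      funext y
      by_cases hy : y ∈ Set.Icc (x - κ * (t - s)) (x + κ * (t - s))
      · rw [Set.indicator_of_mem hy]
        have habs : |x - y| ≤ κ * (t - s) := by
          rw [abs_le]
          exact ⟨by linarith [hy.2], by linarith [hy.1]⟩
        rw [waveKernel, if_pos ⟨hts, habs⟩]
        ring
      · rw [Set.indicator_of_notMem hy, waveKernel, if_neg ?_]
        · ring
        · rintro ⟨-, habs⟩
          rw [abs_le] at habs
          exact hy ⟨by linarith [habs.2], by linarith [habs.1]⟩
    rw [hwk, MeasureTheory.integral_indicator measurableSet_Icc,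
      MeasureTheory.integral_Icc_eq_integral_Ioc,
      ← intervalIntegral.integral_of_le (by linarith : x - κ * (t - s) ≤ x + κ * (t - s))]
    have hsub : (fun y => (1/16 : ℝ) * (|y - κ * s| ^ (-a) + |y + κ * s| ^ (-a)) ^ 2)
        = fun y => (fun u => (1/16 : ℝ) * Fker a κ s u) (y - κ * s) := by
      funext y
      simp only [Fker]
      rw [show 2 * κ * s + (y - κ * s) = y + κ * s by ring]
    rw [hsub, intervalIntegral.integral_comp_sub_right
        (fun u => (1/16 : ℝ) * Fker a κ s u) (κ * s),
      show x - κ * (t - s) - κ * s = x - κ * t by ring,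
      show x + κ * (t - s) - κ * s = x + κ * t - 2 * κ * s by ring,
      intervalIntegral.integral_const_mul]
  rw [intervalIntegral.integral_congr step1, intervalIntegral.integral_const_mul,
    fubini_swap_step ha0 ha hκ (by linarith : x - κ * t ≤ x + κ * t)
      (by linarith : (0:ℝ) ≤ x + κ * t) (by ring : 2 * κ * t = x + κ * t - (x - κ * t)),
    integral_phiFn ha0 ha hκ (by linarith : x - κ * t ≤ 0)
      (by linarith : (0:ℝ) ≤ x + κ * t),
    show -(x - κ * t) = κ * t - x by ring, show x + κ * t = κ * t + x by ring]
  -- now pure algebra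
  rcases eq_or_lt_of_le hM with hM0 | hM0
  · -- κ*t - x = 0, i.e. x = κ*t
    have hxM : x = κ * t := by linarith
    subst hxM
    rcases eq_or_lt_of_le hN with hN0 | hN0
    · -- also κ*t + x = 0 ⇒ t = 0
      have hκt : κ * t = 0 := by linarith
      have ht' : t = 0 := by
        rcases mul_eq_zero.1 hκt with h | h
        · exact absurd h hκ.ne'
        · exact h
      subst ht'
      norm_num [Real.zero_rpow h1a, Real.zero_rpow h12a, Real.zero_rpow h22a]
    · -- N := κ*t + κ*t > 0
      have hNne : κ * t + κ * t ≠ 0 := by positivity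
      have hRN : (κ * t + κ * t) ^ (1 - 2 * a)
          = (κ * t + κ * t) ^ (1 - a) * (κ * t + κ * t) ^ (1 - a) / (κ * t + κ * t) := by
        rw [eq_div_iff hNne, ← Real.rpow_add_one hNne (1 - 2 * a),
          ← Real.rpow_add hN0, show (1:ℝ) - a + (1 - a) = 1 - 2 * a + 1 by ring]
      have hN2 : (κ * t + κ * t) ^ (2 - 2 * a)
          = (κ * t + κ * t) ^ (1 - a) * (κ * t + κ * t) ^ (1 - a) := by
        rw [← Real.rpow_add hN0, show (1:ℝ) - a + (1 - a) = 2 - 2 * a by ring]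
      rw [show κ * t - κ * t = (0:ℝ) by ring]
      rw [hRN, hN2, Real.zero_rpow h1a, Real.zero_rpow h12a, Real.zero_rpow h22a]
      have h2κt : 2 * (κ * t) ≠ 0 := by
        intro hc
        apply hNne
        linarith
      have ht : t ≠ 0 := by rintro rfl; simp at hN0
      field_simp
      ring
  · rcases eq_or_lt_of_le hN with hN0 | hN0
    · -- κ*t + x = 0, i.e. x = -(κ*t)
      have hxN : x = -(κ * t) := by linarith
      subst hxN
      have hMM : κ * t - -(κ * t) = κ * t + κ * t := by ring
      rw [show κ * t + -(κ * t) = (0:ℝ) by ring, hMM]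
      have hMne : κ * t + κ * t ≠ 0 := by
        intro hc
        rw [hMM] at hM0
        linarith
      have hMpos : 0 < κ * t + κ * t := by rw [hMM] at hM0; exact hM0
      have hRM : (κ * t + κ * t) ^ (1 - 2 * a)
          = (κ * t + κ * t) ^ (1 - a) * (κ * t + κ * t) ^ (1 - a) / (κ * t + κ * t) := by
        rw [eq_div_iff hMne, ← Real.rpow_add_one hMne (1 - 2 * a),
          ← Real.rpow_add hMpos, show (1:ℝ) - a + (1 - a) = 1 - 2 * a + 1 by ring]
      have hM2 : (κ * t + κ * t) ^ (2 - 2 * a)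
          = (κ * t + κ * t) ^ (1 - a) * (κ * t + κ * t) ^ (1 - a) := by
        rw [← Real.rpow_add hMpos, show (1:ℝ) - a + (1 - a) = 2 - 2 * a by ring]
      rw [hRM, hM2, Real.zero_rpow h1a, Real.zero_rpow h12a, Real.zero_rpow h22a]
      have ht : t ≠ 0 := by rintro rfl; simp at hMpos
      field_simp
      ring
    · -- both positive
      have hRM : (κ * t - x) ^ (1 - 2 * a)
          = (κ * t - x) ^ (1 - a) * (κ * t - x) ^ (1 - a) / (κ * t - x) := by
        rw [eq_div_iff hM0.ne', ← Real.rpow_add_one hM0.ne' (1 - 2 * a),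
          ← Real.rpow_add hM0, show (1:ℝ) - a + (1 - a) = 1 - 2 * a + 1 by ring]
      have hM2 : (κ * t - x) ^ (2 - 2 * a)
          = (κ * t - x) ^ (1 - a) * (κ * t - x) ^ (1 - a) := by
        rw [← Real.rpow_add hM0, show (1:ℝ) - a + (1 - a) = 2 - 2 * a by ring]
      have hRN : (κ * t + x) ^ (1 - 2 * a)
          = (κ * t + x) ^ (1 - a) * (κ * t + x) ^ (1 - a) / (κ * t + x) := by
        rw [eq_div_iff hN0.ne', ← Real.rpow_add_one hN0.ne' (1 - 2 * a),
          ← Real.rpow_add hN0, show (1:ℝ) - a + (1 - a) = 1 - 2 * a + 1 by ring]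
      have hN2 : (κ * t + x) ^ (2 - 2 * a)
          = (κ * t + x) ^ (1 - a) * (κ * t + x) ^ (1 - a) := by
        rw [← Real.rpow_add hN0, show (1:ℝ) - a + (1 - a) = 2 - 2 * a by ring]
      rw [hRM, hM2, hRN, hN2]
      generalize (κ * t - x) ^ (1 - a) = P
      generalize (κ * t + x) ^ (1 - a) = Q
      field_simp [hM0.ne', hN0.ne', h1a, h12a, h22a, hκ.ne']
      ring
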